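/- Let X be a normed space, F ⊆ X nonempty closed convex, and Q ⊆ X nonempty convex. Then the minimal time function T_Q^F(x) = inf{t ≥ 0 : (x + t•F) ∩ Q ≠ ∅} is a convex function on X (with values in [0, ∞]). -/

import Mathlib

open scoped ENNReal Pointwise

/-- The minimal time function `T_Q^F`. -/
noncomputable def minTime {X : Type*} [NormedAddCommGroup X] [NormedSpace ℝ X]
    (F Q : Set X) (x : X) : ℝ≥0∞ :=
  sInf (ENNReal.ofReal '' {t : ℝ | 0 ≤ t ∧ ∃ f ∈ F, x + t • f ∈ Q})

lemma minTime_mem_aux {X : Type*} [NormedAddCommGroup X] [NormedSpace ℝ X]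
    {F Q : Set X} (hFne : F.Nonempty) (hFconv : Convex ℝ F) (hQconv : Convex ℝ Q)
    {x y : X} {a b t s : ℝ} (ha : 0 ≤ a) (hb : 0 ≤ b) (hab : a + b = 1)
    (ht : t ∈ {t : ℝ | 0 ≤ t ∧ ∃ f ∈ F, x + t • f ∈ Q})
    (hs : s ∈ {t : ℝ | 0 ≤ t ∧ ∃ f ∈ F, y + t • f ∈ Q}) :
    a * t + b * s ∈ {t : ℝ | 0 ≤ t ∧ ∃ f ∈ F, (a • x + b • y) + t • f ∈ Q} := by
  obtain ⟨ht0, f, hf, hxf⟩ := ht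
  obtain ⟨hs0, g, hg, hyg⟩ := hs
  have hat : 0 ≤ a * t := mul_nonneg ha ht0
  have hbs : 0 ≤ b * s := mul_nonneg hb hs0
  have hr : 0 ≤ a * t + b * s := add_nonneg hat hbs
  refine ⟨hr, ?_⟩
  have hQ : a • (x + t • f) + b • (y + s • g) ∈ Q := hQconv hxf hyg ha hb hab
  rcases eq_or_lt_of_le hr with hr0 | hrpos
  · -- a*t + b*s = 0, so a*t = 0 and b*s = 0
    have hat0 : a * t = 0 := le_antisymm (by linarith) hat
    have hbs0 : b * s = 0 := by linarith
    obtain ⟨f0, hf0⟩ := hFne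
    refine ⟨f0, hf0, ?_⟩
    have : a • (x + t • f) + b • (y + s • g) = (a • x + b • y) + (a * t + b * s) • f0 := by
      rw [← hr0, zero_smul, add_zero, smul_add, smul_add, smul_smul, smul_smul,
        hat0, hbs0, zero_smul, zero_smul, add_zero, add_zero]
    rwa [this] at hQ
  · set r := a * t + b * s with hrdef
    have hrne : r ≠ 0 := ne_of_gt hrpos
    have hF : (a * t / r) • f + (b * s / r) • g ∈ F := by
      apply hFconv hf hg (div_nonneg hat (le_of_lt hrpos)) (div_nonneg hbs (le_of_lt hrpos))
      field_simp
      exact hrdef.symm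
    refine ⟨_, hF, ?_⟩
    have : (a • x + b • y) + r • ((a * t / r) • f + (b * s / r) • g)
        = a • (x + t • f) + b • (y + s • g) := by
      rw [smul_add, smul_smul, smul_smul, mul_div_cancel₀ _ hrne, mul_div_cancel₀ _ hrne,
        smul_add, smul_add, smul_smul, smul_smul]
      abel
    rwa [this]

theorem minTime_convex {X : Type*} [NormedAddCommGroup X] [NormedSpace ℝ X]
    (F : Set X) (hFne : F.Nonempty) (hFcl : IsClosed F) (hFconv : Convex ℝ F)
    (Q : Set X) (hQne : Q.Nonempty) (hQconv : Convex ℝ Q) :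
    ∀ x y : X, ∀ a b : ℝ, 0 ≤ a → 0 ≤ b → a + b = 1 →
      minTime F Q (a • x + b • y) ≤
        ENNReal.ofReal a * minTime F Q x + ENNReal.ofReal b * minTime F Q y := by
  intro x y a b ha hb hab
  -- handle degenerate cases a = 0 or b = 0
  rcases eq_or_lt_of_le ha with ha0 | hapos
  · have hb1 : b = 1 := by linarith
    subst hb1
    simp [← ha0]
  rcases eq_or_lt_of_le hb with hb0 | hbpos
  · have ha1 : a = 1 := by linarith
    subst ha1
    simp [← hb0]
  apply ENNReal.le_of_forall_pos_le_add
  intro ε hε hlt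
  have hane : ENNReal.ofReal a ≠ 0 := by simp [ENNReal.ofReal_eq_zero, not_le, hapos]
  have hbne : ENNReal.ofReal b ≠ 0 := by simp [ENNReal.ofReal_eq_zero, not_le, hbpos]
  have hmx : minTime F Q x ≠ ⊤ := by
    intro h
    rw [h, ENNReal.mul_top hane] at hlt
    simp at hlt
  have hmy : minTime F Q y ≠ ⊤ := by
    intro h
    rw [h, ENNReal.mul_top hbne] at hlt
    simp [ENNReal.add_eq_top] at hlt
  have hε2 : (0 : ℝ≥0∞) < (ε : ℝ≥0∞) / 2 := by
    simp [ENNReal.div_pos_iff, hε.ne']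
  -- pick near-optimal elements
  have hx' : sInf (ENNReal.ofReal '' {t : ℝ | 0 ≤ t ∧ ∃ f ∈ F, x + t • f ∈ Q})
      < minTime F Q x + ε / 2 :=
    (ENNReal.lt_add_right hmx hε2.ne').trans_le (le_refl _)
  obtain ⟨u, hu, hult⟩ := exists_lt_of_csInf_lt (by
    rcases Set.eq_empty_or_nonempty (ENNReal.ofReal '' {t : ℝ | 0 ≤ t ∧ ∃ f ∈ F, x + t • f ∈ Q})
      with he | hne
    · exfalso; apply hmx; simp [minTime, he]
    · exact hne) hx'
  have hy' : sInf (ENNReal.ofReal '' {t : ℝ | 0 ≤ t ∧ ∃ f ∈ F, y + t • f ∈ Q})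
      < minTime F Q y + ε / 2 :=
    (ENNReal.lt_add_right hmy hε2.ne').trans_le (le_refl _)
  obtain ⟨v, hv, hvlt⟩ := exists_lt_of_csInf_lt (by
    rcases Set.eq_empty_or_nonempty (ENNReal.ofReal '' {t : ℝ | 0 ≤ t ∧ ∃ f ∈ F, y + t • f ∈ Q})
      with he | hne
    · exfalso; apply hmy; simp [minTime, he]
    · exact hne) hy'
  obtain ⟨t, htmem, rfl⟩ := hu
  obtain ⟨s, hsmem, rfl⟩ := hv
  have hkey := minTime_mem_aux hFne hFconv hQconv ha hb hab htmem hsmem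
  have h1 : minTime F Q (a • x + b • y) ≤ ENNReal.ofReal (a * t + b * s) :=
    sInf_le ⟨_, hkey, rfl⟩
  have h2 : ENNReal.ofReal (a * t + b * s)
      = ENNReal.ofReal a * ENNReal.ofReal t + ENNReal.ofReal b * ENNReal.ofReal s := by
    rw [ENNReal.ofReal_add (mul_nonneg ha htmem.1) (mul_nonneg hb hsmem.1),
      ENNReal.ofReal_mul ha, ENNReal.ofReal_mul hb]
  calc minTime F Q (a • x + b • y)
      ≤ ENNReal.ofReal a * ENNReal.ofReal t + ENNReal.ofReal b * ENNReal.ofReal s := by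
        rw [← h2]; exact h1
    _ ≤ ENNReal.ofReal a * (minTime F Q x + ε / 2)
        + ENNReal.ofReal b * (minTime F Q y + ε / 2) := by
        gcongr <;> first | exact hult.le | exact hvlt.le
    _ = (ENNReal.ofReal a * minTime F Q x + ENNReal.ofReal b * minTime F Q y)
        + (ENNReal.ofReal a + ENNReal.ofReal b) * (ε / 2) := by ring
    _ ≤ _ + ε := by
        have : ENNReal.ofReal a + ENNReal.ofReal b = 1 := by
          rw [← ENNReal.ofReal_add ha hb, hab, ENNReal.ofReal_one]
        rw [this, one_mul]
        gcongr
        exact ENNReal.half_le_self
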